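/- Let α₀ > 0, let α, m : [t₀,∞) → ℝ be continuous with m(t) ≤ −α(t) ≤ −α₀ for all t ≥ t₀, and let g : [t₀,∞) → ℝⁿ be continuous with ‖g(t)‖/α(t) → 0 as t → ∞. Then ∫_{t₀}^{t} exp(∫_{τ}^{t} m(s) ds) ‖g(τ)‖ dτ → 0 as t → ∞. -/

import Mathlib

open Filter Topology MeasureTheory

/-- L'Hôpital step in the proof of Theorem 1. If
`m(t) ≤ -α(t) ≤ -α₀ < 0` and `‖g(t)‖/α(t) → 0` as `t → ∞`, then
`∫_{t₀}^t exp(∫_τ^t m(s) ds) ‖g(τ)‖ dτ → 0` as `t → ∞`. -/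
theorem convolution_term_tendsto_zero {n : ℕ} (t₀ : ℝ) (α₀ : ℝ) (hα₀ : 0 < α₀)
    (α m : ℝ → ℝ) (g : ℝ → EuclideanSpace ℝ (Fin n))
    (hα : ContinuousOn α (Set.Ici t₀)) (hm : ContinuousOn m (Set.Ici t₀))
    (hg : ContinuousOn g (Set.Ici t₀))
    (hle : ∀ t, t₀ ≤ t → m t ≤ -α t ∧ -α t ≤ -α₀)
    (hlim : Tendsto (fun t => ‖g t‖ / α t) atTop (𝓝 0)) :
    Tendsto (fun t => ∫ τ in t₀..t, Real.exp (∫ s in τ..t, m s) * ‖g τ‖)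
      atTop (𝓝 0) := by
  have hαge : ∀ t, t₀ ≤ t → α₀ ≤ α t := fun t ht => by linarith [(hle t ht).2]
  have hαpos : ∀ t, t₀ ≤ t → 0 < α t := fun t ht => lt_of_lt_of_le hα₀ (hαge t ht)
  rw [Metric.tendsto_nhds]
  intro ε hε
  have hε2 : 0 < ε / 2 := by positivity
  have hlim' := Metric.tendsto_nhds.mp hlim (ε / 2) hε2
  rw [eventually_atTop] at hlim'
  obtain ⟨T₁, hT₁⟩ := hlim'
  set T := max T₁ (t₀ + 1) with hTdef
  have ht₀T : t₀ < T := lt_of_lt_of_le (by linarith) (le_max_right _ _)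
  have hgbound : ∀ τ, T ≤ τ → ‖g τ‖ ≤ ε / 2 * α τ := by
    intro τ hτ
    have hτ0 : t₀ ≤ τ := le_trans ht₀T.le hτ
    have h1 := hT₁ τ (le_trans (le_max_left _ _) hτ)
    rw [Real.dist_eq, sub_zero] at h1
    have h2 : ‖g τ‖ / α τ < ε / 2 := lt_of_le_of_lt (le_abs_self _) h1
    have hpos := hαpos τ hτ0
    have h3 : ‖g τ‖ = ‖g τ‖ / α τ * α τ := by field_simp
    rw [h3]
    nlinarith
  set C : ℝ := ∫ τ in t₀..T, ‖g τ‖ with hCdef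
  -- main bound for t ≥ T
  have key : ∀ t, T ≤ t →
      (∫ τ in t₀..t, Real.exp (∫ s in τ..t, m s) * ‖g τ‖)
        ≤ Real.exp (α₀ * T) * C * Real.exp (-(α₀ * t)) + ε / 2 := by
    intro t hTt
    have ht₀t : t₀ ≤ t := le_trans ht₀T.le hTt
    have huIcc : Set.uIcc t₀ t = Set.Icc t₀ t := Set.uIcc_of_le ht₀t
    have hsubIci : Set.Icc t₀ t ⊆ Set.Ici t₀ := Set.Icc_subset_Ici_self
    -- integrability of m on [t₀, t]
    have hmc : ContinuousOn m (Set.uIcc t₀ t) := hm.mono (huIcc ▸ hsubIci)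
    have hmi : IntervalIntegrable m volume t₀ t := hmc.intervalIntegrable
    -- bound for the inner integral
    have hinner : ∀ τ ∈ Set.Icc t₀ t, (∫ s in τ..t, m s) ≤ -α₀ * (t - τ) := by
      intro τ hτ
      have hmiτ : IntervalIntegrable m volume τ t :=
        hmi.mono_set (by
          rw [huIcc, Set.uIcc_of_le hτ.2]; exact Set.Icc_subset_Icc hτ.1 le_rfl)
      have hmono := intervalIntegral.integral_mono_on (f := m) (g := fun _ => -α₀)
        hτ.2 hmiτ intervalIntegrable_const
        (fun s hs => by
          have hs0 : t₀ ≤ s := le_trans hτ.1 hs.1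
          show m s ≤ -α₀
          linarith [(hle s hs0).1, (hle s hs0).2])
      simpa [mul_comm] using hmono
    -- continuity of τ ↦ ∫ s in τ..t, m s on [t₀, t]
    have hIm : ContinuousOn (fun τ => ∫ s in τ..t, m s) (Set.Icc t₀ t) := by
      have h := intervalIntegral.continuousOn_primitive_interval_left
        (f := m) (μ := volume) (a := t₀) (b := t) (hmc.integrableOn_uIcc)
      rwa [huIcc] at h
    -- continuity / integrability of the integrand on [t₀, t]
    have hintc : ContinuousOn (fun τ => Real.exp (∫ s in τ..t, m s) * ‖g τ‖)
        (Set.Icc t₀ t) :=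
      (Real.continuous_exp.comp_continuousOn hIm).mul ((hg.mono hsubIci).norm)
    have hint : IntervalIntegrable (fun τ => Real.exp (∫ s in τ..t, m s) * ‖g τ‖)
        volume t₀ t := (huIcc ▸ hintc).intervalIntegrable
    have hint1 : IntervalIntegrable (fun τ => Real.exp (∫ s in τ..t, m s) * ‖g τ‖)
        volume t₀ T := hint.mono_set (by
          rw [huIcc, Set.uIcc_of_le ht₀T.le]; exact Set.Icc_subset_Icc le_rfl hTt)
    have hint2 : IntervalIntegrable (fun τ => Real.exp (∫ s in τ..t, m s) * ‖g τ‖)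
        volume T t := hint.mono_set (by
          rw [huIcc, Set.uIcc_of_le hTt]; exact Set.Icc_subset_Icc ht₀T.le le_rfl)
    rw [← intervalIntegral.integral_add_adjacent_intervals hint1 hint2]
    -- bound the first piece
    have hgi : IntervalIntegrable (fun τ => ‖g τ‖) volume t₀ T :=
      ((hg.norm).mono (by
        rw [Set.uIcc_of_le ht₀T.le]; exact Set.Icc_subset_Ici_self)).intervalIntegrable
    have hI₁ : (∫ τ in t₀..T, Real.exp (∫ s in τ..t, m s) * ‖g τ‖)
        ≤ Real.exp (α₀ * T) * Real.exp (-(α₀ * t)) * C := by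
      rw [hCdef, ← intervalIntegral.integral_const_mul]
      refine intervalIntegral.integral_mono_on ht₀T.le hint1 (hgi.const_mul _) ?_
      intro τ hτ
      have hτIcc : τ ∈ Set.Icc t₀ t := ⟨hτ.1, le_trans hτ.2 hTt⟩
      have h1 := hinner τ hτIcc
      have h2 : (∫ s in τ..t, m s) ≤ α₀ * T + -(α₀ * t) := by nlinarith [hτ.2]
      have h3 : Real.exp (∫ s in τ..t, m s) ≤ Real.exp (α₀ * T) * Real.exp (-(α₀ * t)) := by
        rw [← Real.exp_add]; exact Real.exp_le_exp.2 h2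
      exact mul_le_mul_of_nonneg_right h3 (norm_nonneg _)
    -- bound the second piece
    have huIccT : Set.uIcc T t = Set.Icc T t := Set.uIcc_of_le hTt
    have hsubT : Set.Icc T t ⊆ Set.Ici t₀ := fun x hx => le_trans ht₀T.le hx.1
    have hαc : ContinuousOn α (Set.uIcc T t) := hα.mono (huIccT ▸ hsubT)
    have hαi : IntervalIntegrable α volume T t := hαc.intervalIntegrable
    set P : ℝ → ℝ := fun τ => ∫ s in T..τ, α s with hPdef
    have hPc : ContinuousOn P (Set.Icc T t) := by
      have h := intervalIntegral.continuousOn_primitive_interval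
        (f := α) (μ := volume) (a := T) (b := t) (hαc.integrableOn_uIcc)
      rwa [huIccT] at h
    have hPderiv : ∀ τ ∈ Set.uIcc T t,
        HasDerivAt (fun x => Real.exp (P x - P t)) (Real.exp (P τ - P t) * α τ) τ := by
      intro τ hτ
      rw [huIccT] at hτ
      have hct : ContinuousAt α τ :=
        hα.continuousAt (Ici_mem_nhds (lt_of_lt_of_le ht₀T hτ.1))
      have hαiτ : IntervalIntegrable α volume T τ :=
        hαi.mono_set (by
          rw [huIccT, Set.uIcc_of_le hτ.1]; exact Set.Icc_subset_Icc le_rfl hτ.2)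
      have hmeas : StronglyMeasurableAtFilter α (𝓝 τ) volume :=
        AEStronglyMeasurable.stronglyMeasurableAtFilter_of_mem
          (hα.aestronglyMeasurable measurableSet_Ici)
          (Ici_mem_nhds (lt_of_lt_of_le ht₀T hτ.1))
      have hP' : HasDerivAt P (α τ) τ :=
        intervalIntegral.integral_hasDerivAt_right hαiτ hmeas hct
      exact ((hP'.sub_const (P t)).exp)
    have hderint : IntervalIntegrable (fun τ => Real.exp (P τ - P t) * α τ) volume T t := by
      apply ContinuousOn.intervalIntegrable
      rw [huIccT]
      exact (Real.continuous_exp.comp_continuousOn (hPc.sub continuousOn_const)).mul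
        (hα.mono hsubT)
    have hFTC := intervalIntegral.integral_eq_sub_of_hasDerivAt hPderiv hderint
    have hPT : P T = 0 := intervalIntegral.integral_same
    have hI₂ : (∫ τ in T..t, Real.exp (∫ s in τ..t, m s) * ‖g τ‖) ≤ ε / 2 := by
      have hstep : (∫ τ in T..t, Real.exp (∫ s in τ..t, m s) * ‖g τ‖)
          ≤ ∫ τ in T..t, ε / 2 * (Real.exp (P τ - P t) * α τ) := by
        refine intervalIntegral.integral_mono_on hTt hint2 (hderint.const_mul _) ?_
        intro τ hτ
        have hτ0 : t₀ ≤ τ := le_trans ht₀T.le hτ.1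
        have hαiτ : IntervalIntegrable α volume τ t :=
          hαi.mono_set (by
            rw [huIccT, Set.uIcc_of_le hτ.2]; exact Set.Icc_subset_Icc hτ.1 le_rfl)
        have hαiTτ : IntervalIntegrable α volume T τ :=
          hαi.mono_set (by
            rw [huIccT, Set.uIcc_of_le hτ.1]; exact Set.Icc_subset_Icc le_rfl hτ.2)
        have hadd := intervalIntegral.integral_add_adjacent_intervals hαiTτ hαiτ
        have hmiτ : IntervalIntegrable m volume τ t :=
          hmi.mono_set (by
            rw [huIcc, Set.uIcc_of_le hτ.2]; exact Set.Icc_subset_Icc hτ0 le_rfl)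
        have hmono := intervalIntegral.integral_mono_on (f := m) (g := fun s => -α s)
          hτ.2 hmiτ hαiτ.neg
          (fun s hs => by show m s ≤ -α s; exact (hle s (le_trans hτ0 hs.1)).1)
        have hneg : (∫ s in τ..t, -α s) = -(P t - P τ) := by
          rw [intervalIntegral.integral_neg]
          have h4 : (∫ s in τ..t, α s) = P t - P τ := by
            simp only [hPdef]; linarith [hadd]
          rw [h4]
        have h1 : (∫ s in τ..t, m s) ≤ P τ - P t := by
          rw [hneg] at hmono; linarith
        have h2 : Real.exp (∫ s in τ..t, m s) ≤ Real.exp (P τ - P t) :=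
          Real.exp_le_exp.2 h1
        have h3 := hgbound τ hτ.1
        have hαp := hαpos τ hτ0
        have he2 : (0:ℝ) < Real.exp (P τ - P t) := Real.exp_pos _
        calc Real.exp (∫ s in τ..t, m s) * ‖g τ‖
            ≤ Real.exp (P τ - P t) * (ε / 2 * α τ) :=
              mul_le_mul h2 h3 (norm_nonneg _) he2.le
          _ = ε / 2 * (Real.exp (P τ - P t) * α τ) := by ring
      have hval : (∫ τ in T..t, ε / 2 * (Real.exp (P τ - P t) * α τ)) ≤ ε / 2 := by
        rw [intervalIntegral.integral_const_mul, hFTC, hPT, sub_self, Real.exp_zero]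
        have hpos : (0:ℝ) < Real.exp (0 - P t) := Real.exp_pos _
        nlinarith
      linarith
    have hcomm : Real.exp (α₀ * T) * Real.exp (-(α₀ * t)) * C
        = Real.exp (α₀ * T) * C * Real.exp (-(α₀ * t)) := by ring
    linarith [hI₁, hI₂, le_of_eq hcomm]
  -- conclude
  have hdecay : Tendsto (fun t => Real.exp (α₀ * T) * C * Real.exp (-(α₀ * t)))
      atTop (𝓝 0) := by
    have h1 : Tendsto (fun t : ℝ => -(α₀ * t)) atTop atBot :=
      tendsto_neg_atTop_atBot.comp (Tendsto.const_mul_atTop hα₀ tendsto_id)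
    have h2 : Tendsto (fun t : ℝ => Real.exp (-(α₀ * t))) atTop (𝓝 0) :=
      Real.tendsto_exp_atBot.comp h1
    simpa using h2.const_mul (Real.exp (α₀ * T) * C)
  have hev : ∀ᶠ t in atTop, Real.exp (α₀ * T) * C * Real.exp (-(α₀ * t)) < ε / 2 :=
    hdecay.eventually (gt_mem_nhds hε2)
  filter_upwards [hev, eventually_ge_atTop T] with t h1 hTt
  have ht₀t : t₀ ≤ t := le_trans ht₀T.le hTt
  have hF := key t hTt
  have hFnonneg : 0 ≤ ∫ τ in t₀..t, Real.exp (∫ s in τ..t, m s) * ‖g τ‖ :=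
    intervalIntegral.integral_nonneg ht₀t (fun τ _ => by positivity)
  rw [Real.dist_eq, sub_zero, abs_of_nonneg hFnonneg]
  linarith
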